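/- arXiv:2209.13639 — 2 statements merged into one kernel-verified Lean document; each statement's English description precedes it below -/
import Mathlib

section
/- Fix integers 1 ≤ k ≤ K, nonnegative integer n, and reals α > 2, β > 0, D > 0, θ > 0. Define P(γ̄) = (2k/Γ(n+1))·C(K,k)·Σ_{j=0}^{K-k} (-1)^j C(K-k,j) D^{-2(k+j)} ∫_0^D γ(n+1, β x^α/(γ̄ θ)) x^{2(k+j)-1} dx. Then γ̄^{n+1}·P(γ̄) converges as γ̄ → ∞ to (2k/Γ(n+2))·C(K,k)·(βD^α/θ)^{n+1}·Σ_{j=0}^{K-k} (-1)^j C(K-k,j)/(α(n+1)+2(k+j)). -/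
open Filter Topology intervalIntegral

noncomputable def lowerGamma (a x : ℝ) : ℝ := ∫ s in (0:ℝ)..x, s ^ (a - 1) * Real.exp (-s)

lemma lg_eq (n : ℕ) (z : ℝ) :
    lowerGamma (n + 1) z = ∫ s in (0:ℝ)..z, s ^ n * Real.exp (-s) := by
  unfold lowerGamma
  simp [add_sub_cancel_right, Real.rpow_natCast]

lemma cont_int (n : ℕ) : Continuous (fun s : ℝ => s ^ n * Real.exp (-s)) := by
  fun_prop

lemma lg_cont (n : ℕ) : Continuous (lowerGamma (n + 1)) := by
  have := intervalIntegral.continuous_primitive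
    (f := fun s : ℝ => s ^ n * Real.exp (-s)) (μ := MeasureTheory.volume)
    (fun a b => ((cont_int n).intervalIntegrable a b)) 0
  have he : lowerGamma (↑n + 1) = fun b => ∫ x in (0:ℝ)..b, x ^ n * Real.exp (-x) :=
    funext fun z => lg_eq n z
  rw [he]; exact this

lemma lg_le (n : ℕ) {z : ℝ} (hz : 0 ≤ z) :
    lowerGamma (n + 1) z ≤ z ^ (n + 1) / (n + 1) := by
  rw [lg_eq]
  have h1 : (∫ s in (0:ℝ)..z, s ^ n * Real.exp (-s)) ≤ ∫ s in (0:ℝ)..z, s ^ n := by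
    apply intervalIntegral.integral_mono_on hz
      ((cont_int n).intervalIntegrable 0 z) ((continuous_pow n).intervalIntegrable 0 z)
    intro x hx
    have hx0 : (0:ℝ) ≤ x := hx.1
    calc x ^ n * Real.exp (-x) ≤ x ^ n * 1 := by
          have : Real.exp (-x) ≤ 1 := Real.exp_le_one_iff.mpr (by linarith)
          exact mul_le_mul_of_nonneg_left this (by positivity)
      _ = x ^ n := by ring
  calc (∫ s in (0:ℝ)..z, s ^ n * Real.exp (-s)) ≤ ∫ s in (0:ℝ)..z, s ^ n := h1
    _ = z ^ (n + 1) / (n + 1) := by rw [integral_pow]; simp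

lemma lg_ge (n : ℕ) {z : ℝ} (hz : 0 ≤ z) :
    z ^ (n + 1) / (n + 1) - z ^ (n + 2) / (n + 2) ≤ lowerGamma (n + 1) z := by
  rw [lg_eq]
  have h1 : (∫ s in (0:ℝ)..z, (s ^ n - s ^ (n + 1)))
      ≤ ∫ s in (0:ℝ)..z, s ^ n * Real.exp (-s) := by
    apply intervalIntegral.integral_mono_on hz
      (((continuous_pow n).sub (continuous_pow (n+1))).intervalIntegrable 0 z)
      ((cont_int n).intervalIntegrable 0 z)
    intro x hx
    have hx0 : (0:ℝ) ≤ x := hx.1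
    have h2 : 1 - x ≤ Real.exp (-x) := by
      have := Real.add_one_le_exp (-x); linarith
    calc x ^ n - x ^ (n+1) = x ^ n * (1 - x) := by ring
      _ ≤ x ^ n * Real.exp (-x) := by
          apply mul_le_mul_of_nonneg_left h2 (by positivity)
  have h2 : (∫ s in (0:ℝ)..z, (s ^ n - s ^ (n + 1)))
      = z ^ (n + 1) / (n + 1) - z ^ (n + 2) / (n + 2) := by
    rw [intervalIntegral.integral_sub ((continuous_pow n).intervalIntegrable 0 z)
      ((continuous_pow (n+1)).intervalIntegrable 0 z), integral_pow, integral_pow]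
    norm_num; ring
  linarith

lemma J_eq {α : ℝ} (hα : 0 < α) (N q : ℕ) (hq : 1 ≤ q) {D : ℝ} (hD : 0 < D) :
    ∫ x in (0:ℝ)..D, (x ^ α) ^ N * x ^ (2 * q - 1)
      = D ^ (α * N + 2 * q) / (α * N + 2 * q) := by
  have h2q : (1:ℕ) ≤ 2 * q := by omega
  have hr : (-1:ℝ) < α * N + 2 * q - 1 := by
    have h1 : (0:ℝ) ≤ α * N := by positivity
    have h2 : (2:ℝ) ≤ 2 * (q:ℝ) := by
      have : (1:ℝ) ≤ (q:ℝ) := by exact_mod_cast hq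
      linarith
    linarith
  have hcg : ∀ x ∈ Set.uIcc (0:ℝ) D,
      (x ^ α) ^ N * x ^ (2 * q - 1) = x ^ (α * N + 2 * q - 1) := by
    intro x hx
    rw [Set.uIcc_of_le hD.le] at hx
    have hx0 : (0:ℝ) ≤ x := hx.1
    rw [← Real.rpow_natCast (x ^ α) N, ← Real.rpow_mul hx0,
      ← Real.rpow_natCast x (2 * q - 1),
      ← Real.rpow_add_of_nonneg hx0 (by positivity) (by positivity)]
    congr 1
    push_cast [Nat.cast_sub h2q]
    ring
  rw [intervalIntegral.integral_congr hcg, integral_rpow (Or.inl hr)]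
  rw [Real.zero_rpow (by linarith)]
  norm_num

lemma key (n m : ℕ) (hm : 1 ≤ m) {α β D θ : ℝ} (hα : 2 < α) (hβ : 0 < β)
    (hD : 0 < D) (hθ : 0 < θ) :
    Filter.Tendsto (fun g : ℝ => g ^ (n + 1) *
        ∫ x in (0:ℝ)..D, lowerGamma (n + 1) (β * x ^ α / (g * θ)) * x ^ (2 * m - 1))
      atTop
      (nhds ((β / θ) ^ (n + 1) * D ^ (α * (n + 1) + 2 * m) /
        ((n + 1) * (α * (n + 1) + 2 * m)))) := by
  have hα0 : (0:ℝ) < α := by linarith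
  set d1 : ℝ := α * (n + 1) + 2 * m with hd1
  set d2 : ℝ := α * (n + 2) + 2 * m with hd2
  set L : ℝ := (β / θ) ^ (n + 1) * D ^ d1 / ((n + 1) * d1) with hL
  set C2 : ℝ := (β / θ) ^ (n + 2) * D ^ d2 / ((n + 2) * d2) with hC2
  have hJ1 : ∫ x in (0:ℝ)..D, (x ^ α) ^ (n+1) * x ^ (2 * m - 1) = D ^ d1 / d1 := by
    have := J_eq hα0 (n+1) m hm hD
    rw [this]; push_cast; rfl
  have hJ2 : ∫ x in (0:ℝ)..D, (x ^ α) ^ (n+2) * x ^ (2 * m - 1) = D ^ d2 / d2 := by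
    have := J_eq hα0 (n+2) m hm hD
    rw [this]; push_cast; rfl
  have hbounds : ∀ᶠ g : ℝ in atTop,
      L - C2 * g⁻¹ ≤ g ^ (n + 1) *
        (∫ x in (0:ℝ)..D, lowerGamma (↑n + 1) (β * x ^ α / (g * θ)) * x ^ (2 * m - 1)) ∧
      g ^ (n + 1) *
        (∫ x in (0:ℝ)..D, lowerGamma (↑n + 1) (β * x ^ α / (g * θ)) * x ^ (2 * m - 1)) ≤ L := by
    filter_upwards [eventually_gt_atTop (0:ℝ)] with g hg
    have hgne : g ≠ 0 := ne_of_gt hg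
    have hgθ : g * θ ≠ 0 := by positivity
    have hu : ∀ x ∈ Set.Icc (0:ℝ) D, 0 ≤ β * x ^ α / (g * θ) := by
      intro x hx
      have := Real.rpow_nonneg hx.1 α
      positivity
    have hcontu : Continuous (fun x : ℝ => β * x ^ α / (g * θ)) :=
      (continuous_const.mul (Real.continuous_rpow_const hα0.le)).div_const _
    have hcf : Continuous (fun x : ℝ =>
        lowerGamma (↑n + 1) (β * x ^ α / (g * θ)) * x ^ (2 * m - 1)) :=
      ((lg_cont n).comp hcontu).mul (continuous_pow _)
    have hc1 : Continuous (fun x : ℝ =>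
        (β * x ^ α / (g * θ)) ^ (n+1) / (↑n+1) * x ^ (2 * m - 1)) :=
      ((hcontu.pow _).div_const _).mul (continuous_pow _)
    have hc2 : Continuous (fun x : ℝ =>
        ((β * x ^ α / (g * θ)) ^ (n+1) / (↑n+1)
          - (β * x ^ α / (g * θ)) ^ (n+2) / (↑n+2)) * x ^ (2 * m - 1)) :=
      (((hcontu.pow _).div_const _).sub ((hcontu.pow _).div_const _)).mul (continuous_pow _)
    have hpow1 : g ^ (n+1) * (β / (g * θ)) ^ (n+1) = (β / θ) ^ (n+1) := by
      rw [← mul_pow]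
      congr 1
      field_simp
    have hpow2 : g ^ (n+1) * (β / (g * θ)) ^ (n+2) = (β / θ) ^ (n+2) * g⁻¹ := by
      rw [div_mul_eq_div_div_swap, div_pow]
      field_simp
      ring
    have hIu : (∫ x in (0:ℝ)..D, (β * x ^ α / (g * θ)) ^ (n+1) / (↑n+1) * x ^ (2 * m - 1))
        = (β / (g * θ)) ^ (n+1) / (↑n+1) * (D ^ d1 / d1) := by
      have hcongr : (fun x : ℝ => (β * x ^ α / (g * θ)) ^ (n+1) / (↑n+1) * x ^ (2 * m - 1))
          = fun x : ℝ => (β / (g * θ)) ^ (n+1) / (↑n+1) * ((x ^ α) ^ (n+1) * x ^ (2 * m - 1)) :=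
        funext fun x => by ring
      rw [hcongr, intervalIntegral.integral_const_mul, hJ1]
    have hIl : (∫ x in (0:ℝ)..D, ((β * x ^ α / (g * θ)) ^ (n+1) / (↑n+1)
          - (β * x ^ α / (g * θ)) ^ (n+2) / (↑n+2)) * x ^ (2 * m - 1))
        = (β / (g * θ)) ^ (n+1) / (↑n+1) * (D ^ d1 / d1)
          - (β / (g * θ)) ^ (n+2) / (↑n+2) * (D ^ d2 / d2) := by
      have hcongr : (fun x : ℝ => ((β * x ^ α / (g * θ)) ^ (n+1) / (↑n+1)
            - (β * x ^ α / (g * θ)) ^ (n+2) / (↑n+2)) * x ^ (2 * m - 1))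
          = fun x : ℝ => (β / (g * θ)) ^ (n+1) / (↑n+1) * ((x ^ α) ^ (n+1) * x ^ (2 * m - 1))
            - (β / (g * θ)) ^ (n+2) / (↑n+2) * ((x ^ α) ^ (n+2) * x ^ (2 * m - 1)) :=
        funext fun x => by ring
      have hi1 : IntervalIntegrable (fun x : ℝ => (β / (g * θ)) ^ (n+1) / (↑n+1) * ((x ^ α) ^ (n+1) * x ^ (2 * m - 1))) MeasureTheory.volume 0 D :=
          ((continuous_const.mul (((Real.continuous_rpow_const hα0.le).pow _).mul
            (continuous_pow _))).intervalIntegrable 0 D)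
      have hi2 : IntervalIntegrable (fun x : ℝ => (β / (g * θ)) ^ (n+2) / (↑n+2) * ((x ^ α) ^ (n+2) * x ^ (2 * m - 1))) MeasureTheory.volume 0 D :=
          ((continuous_const.mul (((Real.continuous_rpow_const hα0.le).pow _).mul
            (continuous_pow _))).intervalIntegrable 0 D)
      rw [hcongr, intervalIntegral.integral_sub hi1 hi2,
        intervalIntegral.integral_const_mul, intervalIntegral.integral_const_mul, hJ1, hJ2]
    have hle_up : (∫ x in (0:ℝ)..D, lowerGamma (↑n + 1) (β * x ^ α / (g * θ)) * x ^ (2 * m - 1))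
        ≤ ∫ x in (0:ℝ)..D, (β * x ^ α / (g * θ)) ^ (n+1) / (↑n+1) * x ^ (2 * m - 1) := by
      apply intervalIntegral.integral_mono_on hD.le (hcf.intervalIntegrable 0 D)
        (hc1.intervalIntegrable 0 D)
      intro x hx
      exact mul_le_mul_of_nonneg_right (lg_le n (hu x hx)) (pow_nonneg hx.1 _)
    have hle_lo : (∫ x in (0:ℝ)..D, ((β * x ^ α / (g * θ)) ^ (n+1) / (↑n+1)
          - (β * x ^ α / (g * θ)) ^ (n+2) / (↑n+2)) * x ^ (2 * m - 1))
        ≤ ∫ x in (0:ℝ)..D, lowerGamma (↑n + 1) (β * x ^ α / (g * θ)) * x ^ (2 * m - 1) := by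
      apply intervalIntegral.integral_mono_on hD.le (hc2.intervalIntegrable 0 D)
        (hcf.intervalIntegrable 0 D)
      intro x hx
      exact mul_le_mul_of_nonneg_right (lg_ge n (hu x hx)) (pow_nonneg hx.1 _)
    constructor
    · have step : L - C2 * g⁻¹ = g ^ (n+1) *
          ((β / (g * θ)) ^ (n+1) / (↑n+1) * (D ^ d1 / d1)
            - (β / (g * θ)) ^ (n+2) / (↑n+2) * (D ^ d2 / d2)) := by
        rw [hL, hC2, show (β / θ) ^ (n + 1) * D ^ d1 / (((n:ℝ) + 1) * d1) = (β / θ) ^ (n + 1) * D ^ d1 / ((n:ℝ) + 1) / d1 from (div_div _ _ _).symm,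
          show (β / θ) ^ (n + 2) * D ^ d2 / (((n:ℝ) + 2) * d2) = (β / θ) ^ (n + 2) * D ^ d2 / ((n:ℝ) + 2) / d2 from (div_div _ _ _).symm]
        have h1 : ((n:ℝ)+1) ≠ 0 := by positivity
        have h2 : ((n:ℝ)+2) ≠ 0 := by positivity
        linear_combination (-(D ^ d1 / d1) / ((n:ℝ)+1)) * hpow1 + ((D ^ d2 / d2) / ((n:ℝ)+2)) * hpow2
      rw [step, ← hIl]
      exact mul_le_mul_of_nonneg_left hle_lo (pow_nonneg hg.le _)
    · have step : g ^ (n+1) *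
          ((β / (g * θ)) ^ (n+1) / (↑n+1) * (D ^ d1 / d1)) = L := by
        rw [hL, show (β / θ) ^ (n + 1) * D ^ d1 / (((n:ℝ) + 1) * d1) = (β / θ) ^ (n + 1) * D ^ d1 / ((n:ℝ) + 1) / d1 from (div_div _ _ _).symm]
        have h1 : ((n:ℝ)+1) ≠ 0 := by positivity
        linear_combination ((D ^ d1 / d1) / ((n:ℝ)+1)) * hpow1
      calc g ^ (n+1) *
            (∫ x in (0:ℝ)..D, lowerGamma (↑n + 1) (β * x ^ α / (g * θ)) * x ^ (2 * m - 1))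
          ≤ g ^ (n+1) * ((β / (g * θ)) ^ (n+1) / (↑n+1) * (D ^ d1 / d1)) :=
            mul_le_mul_of_nonneg_left (hle_up.trans_eq hIu) (pow_nonneg hg.le _)
        _ = L := step
  apply tendsto_of_tendsto_of_tendsto_of_le_of_le'
    (g := fun g : ℝ => L - C2 * g⁻¹) (h := fun _ : ℝ => L)
  · have h0 : Filter.Tendsto (fun g : ℝ => C2 * g⁻¹) atTop (nhds 0) := by
      simpa using tendsto_inv_atTop_zero.const_mul C2
    simpa using tendsto_const_nhds.sub h0
  · exact tendsto_const_nhds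
  · exact hbounds.mono fun g h => h.1
  · exact hbounds.mono fun g h => h.2

theorem stmt11 (k K n : ℕ) (hk : 1 ≤ k) (hK : k ≤ K)
    (α β D θ : ℝ) (hα : 2 < α) (hβ : 0 < β) (hD : 0 < D) (hθ : 0 < θ) :
    Tendsto
      (fun g : ℝ => g ^ (n + 1) *
        (2 * k / Real.Gamma (n + 1) * (K.choose k : ℝ) *
          ∑ j ∈ Finset.range (K - k + 1), (-1 : ℝ) ^ j * ((K - k).choose j : ℝ) / D ^ (2 * (k + j)) *
            ∫ x in (0:ℝ)..D, lowerGamma (n + 1) (β * x ^ α / (g * θ)) * x ^ (2 * (k + j) - 1)))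
      atTop
      (nhds (2 * k / Real.Gamma (n + 2) * (K.choose k : ℝ) * (β * D ^ α / θ) ^ (n + 1) *
        ∑ j ∈ Finset.range (K - k + 1),
          (-1 : ℝ) ^ j * ((K - k).choose j : ℝ) / (α * (n + 1) + 2 * (k + j)))) := by
  set c0 : ℝ := 2 * k / Real.Gamma (n + 1) * (K.choose k : ℝ) with hc0
  set t : ℕ → ℝ := fun j => (-1 : ℝ) ^ j * ((K - k).choose j : ℝ) / D ^ (2 * (k + j)) with ht
  set Lj : ℕ → ℝ := fun j => (β / θ) ^ (n + 1) * D ^ (α * (n + 1) + 2 * (k + j : ℕ)) /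
      ((n + 1) * (α * (n + 1) + 2 * (k + j : ℕ))) with hLj
  have hfun : ∀ g : ℝ, g ^ (n + 1) *
      (c0 * ∑ j ∈ Finset.range (K - k + 1), t j *
        ∫ x in (0:ℝ)..D, lowerGamma (n + 1) (β * x ^ α / (g * θ)) * x ^ (2 * (k + j) - 1))
      = c0 * ∑ j ∈ Finset.range (K - k + 1), t j * (g ^ (n + 1) *
        ∫ x in (0:ℝ)..D, lowerGamma (n + 1) (β * x ^ α / (g * θ)) * x ^ (2 * (k + j) - 1)) := by
    intro g
    rw [Finset.mul_sum, Finset.mul_sum, Finset.mul_sum]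
    apply Finset.sum_congr rfl
    intro j _
    ring
  have hkey : Filter.Tendsto (fun g : ℝ => c0 * ∑ j ∈ Finset.range (K - k + 1), t j *
      (g ^ (n + 1) *
        ∫ x in (0:ℝ)..D, lowerGamma (n + 1) (β * x ^ α / (g * θ)) * x ^ (2 * (k + j) - 1)))
      atTop (nhds (c0 * ∑ j ∈ Finset.range (K - k + 1), t j * Lj j)) := by
    apply Filter.Tendsto.const_mul
    apply tendsto_finset_sum
    intro j _
    exact (key n (k + j) (le_trans hk (Nat.le_add_right k j)) hα hβ hD hθ).const_mul (t j)
  have hconst : c0 * ∑ j ∈ Finset.range (K - k + 1), t j * Lj j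
      = 2 * k / Real.Gamma (n + 2) * (K.choose k : ℝ) * (β * D ^ α / θ) ^ (n + 1) *
        ∑ j ∈ Finset.range (K - k + 1),
          (-1 : ℝ) ^ j * ((K - k).choose j : ℝ) / (α * (n + 1) + 2 * (k + j)) := by
    rw [Finset.mul_sum, Finset.mul_sum]
    apply Finset.sum_congr rfl
    intro j _
    have hΓpos : 0 < Real.Gamma ((n:ℝ) + 1) := Real.Gamma_pos_of_pos (by positivity)
    have hΓ : Real.Gamma ((n:ℝ) + 2) = ((n:ℝ) + 1) * Real.Gamma ((n:ℝ) + 1) := by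
      have h := Real.Gamma_add_one (s := (n:ℝ) + 1) (by positivity)
      rw [show ((n:ℝ) + 2) = ((n:ℝ) + 1) + 1 by ring, h]
    have hDsplit : D ^ (α * ((n:ℝ) + 1) + 2 * ((k + j : ℕ) : ℝ))
        = (D ^ α) ^ (n + 1) * D ^ (2 * (k + j)) := by
      rw [Real.rpow_add hD]
      congr 1
      · rw [← Real.rpow_natCast (D ^ α) (n + 1), ← Real.rpow_mul hD.le]
        congr 1
        push_cast
        ring
      · rw [show (2 * ((k + j : ℕ) : ℝ)) = (((2 * (k + j) : ℕ)) : ℝ) by push_cast; ring,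
          Real.rpow_natCast]
    have hmp : (β * D ^ α / θ) ^ (n + 1) = (β / θ) ^ (n + 1) * (D ^ α) ^ (n + 1) := by
      rw [← mul_pow]
      congr 1
      ring
    simp only [hc0, hLj, ht]
    rw [hΓ, hmp, hDsplit]
    have hd : (0:ℝ) < α * ((n:ℝ) + 1) + 2 * ((k + j : ℕ) : ℝ) := by
      have h1 : (0:ℝ) < α * ((n:ℝ) + 1) := by positivity
      have h2 : (1:ℝ) ≤ ((k + j : ℕ) : ℝ) := by
        exact_mod_cast le_trans hk (Nat.le_add_right k j)
      linarith
    have hDk : (D:ℝ) ^ (2 * (k + j)) ≠ 0 := pow_ne_zero _ hD.ne'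
    have hn1 : ((n:ℝ) + 1) ≠ 0 := by positivity
    push_cast
    push_cast at hd
    field_simp
  rw [← hconst]
  exact hkey.congr fun g => (hfun g).symm
end

section
/- Fix a nonnegative integer n and reals α > 2, c > 0. Define p(D) = ∫_0^D γ(n+1, c x^α)·(2x/D²) dx / Γ(n+1). Then D²·(1 − p(D)) → c^{-2/α}·Γ(n+1+2/α)/Γ(n+1) as D → ∞. -/
open Filter Topology

open MeasureTheory Set Real in
theorem stmt13 (n : ℕ) (α c : ℝ) (hα : 2 < α) (hc : 0 < c) :
    Tendsto
      (fun D : ℝ => D ^ 2 *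
        (1 - (∫ x in (0:ℝ)..D, lowerGamma (n + 1) (c * x ^ α) * (2 * x / D ^ 2)) /
          Real.Gamma (n + 1)))
      atTop (nhds (c ^ (-2 / α) * Real.Gamma (n + 1 + 2 / α) / Real.Gamma (n + 1))) := by
  have hα0 : 0 < α := by linarith
  set Γn := Real.Gamma ((n : ℝ) + 1) with hΓn
  have hΓpos : 0 < Γn := Real.Gamma_pos_of_pos (by positivity)
  set f : ℝ → ℝ := fun s => s ^ n * Real.exp (-s) with hfdef
  have hfc : Continuous f := (continuous_pow n).mul (continuous_neg.rexp)
  have hfnn : ∀ s : ℝ, 0 ≤ s → 0 ≤ f s := fun s hs =>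
    mul_nonneg (pow_nonneg hs n) (Real.exp_pos _).le
  set φ : ℝ → ℝ := fun y => ∫ s in (0:ℝ)..y, f s with hφdef
  have hlg : ∀ y : ℝ, lowerGamma ((n : ℝ) + 1) y = φ y := by
    intro y
    unfold lowerGamma
    refine intervalIntegral.integral_congr fun s _ => ?_
    rw [show ((n:ℝ) + 1) - 1 = (n:ℝ) by ring, Real.rpow_natCast]
  have hφd : ∀ y : ℝ, HasDerivAt φ (f y) y := fun y =>
    intervalIntegral.integral_hasDerivAt_right (hfc.intervalIntegrable _ _)
      (hfc.stronglyMeasurableAtFilter _ _) hfc.continuousAt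
  have hφcont : Continuous φ := continuous_iff_continuousAt.2 fun y => (hφd y).continuousAt
  -- integrability of f on Ioi 0 and Gamma as integral
  have hΓint : IntegrableOn f (Ioi 0) := by
    have h := Real.GammaIntegral_convergent (s := (n:ℝ) + 1) (by positivity)
    refine h.congr_fun (fun x hx => ?_) measurableSet_Ioi
    dsimp only
    rw [add_sub_cancel_right, Real.rpow_natCast, mul_comm]
  have hΓeq : Γn = ∫ s in Ioi (0:ℝ), f s := by
    rw [hΓn, Real.Gamma_eq_integral (by positivity : (0:ℝ) < (n:ℝ) + 1)]
    refine setIntegral_congr_fun measurableSet_Ioi fun x hx => ?_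
    rw [add_sub_cancel_right, Real.rpow_natCast, mul_comm]
  set U : ℝ → ℝ := fun y => ∫ s in Ioi y, f s with hUdef
  have hUeq : ∀ y : ℝ, 0 ≤ y → Γn - φ y = U y := by
    intro y hy
    have h1 : φ y = ∫ s in Ioc 0 y, f s := intervalIntegral.integral_of_le hy
    have h2 : (∫ s in Ioi (0:ℝ), f s) = (∫ s in Ioc 0 y, f s) + ∫ s in Ioi y, f s := by
      rw [← setIntegral_union (Ioc_disjoint_Ioi le_rfl) measurableSet_Ioi
        (hΓint.mono_set Ioc_subset_Ioi_self) (hΓint.mono_set (Ioi_subset_Ioi hy)),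
        Ioc_union_Ioi_eq_Ioi hy]
    rw [hΓeq, h1, h2]; ring
  have hUnn : ∀ y : ℝ, 0 ≤ y → 0 ≤ U y := fun y hy =>
    setIntegral_nonneg measurableSet_Ioi fun s hs => hfnn s (hy.trans hs.le)
  -- exponential bound on U
  set f2 : ℝ → ℝ := fun s => s ^ n * Real.exp (-(s/2)) with hf2def
  have hf2nn : ∀ s : ℝ, 0 ≤ s → 0 ≤ f2 s := fun s hs =>
    mul_nonneg (pow_nonneg hs n) (Real.exp_pos _).le
  have hf2int : IntegrableOn f2 (Ioi 0) := by
    have h := integrableOn_rpow_mul_exp_neg_mul_rpow (p := 1) (s := (n:ℝ)) (b := 1/2)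
      (lt_of_lt_of_le neg_one_lt_zero (Nat.cast_nonneg n)) one_pos (by norm_num)
    refine h.congr_fun (fun x hx => ?_) measurableSet_Ioi
    dsimp only
    rw [Real.rpow_one, Real.rpow_natCast]
    show _ = x ^ n * Real.exp (-(x/2))
    ring_nf
  set M := ∫ s in Ioi (0:ℝ), f2 s with hMdef
  have hUb : ∀ y : ℝ, 0 ≤ y → U y ≤ M * Real.exp (-(y/2)) := by
    intro y hy
    have hsub : Ioi y ⊆ Ioi 0 := Ioi_subset_Ioi hy
    have step1 : U y ≤ ∫ s in Ioi y, f2 s * Real.exp (-(y/2)) := by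
      refine setIntegral_mono_on (hΓint.mono_set hsub)
        ((hf2int.mono_set hsub).mul_const _) measurableSet_Ioi ?_
      intro s hs
      have hs0 : 0 ≤ s := hy.trans hs.le
      have h1 : Real.exp (-(s/2)) ≤ Real.exp (-(y/2)) := Real.exp_le_exp.2 (by
        have : y < s := hs
        linarith)
      calc f s = f2 s * Real.exp (-(s/2)) := by
            simp only [hfdef, hf2def]
            rw [mul_assoc, ← Real.exp_add]
            ring_nf
        _ ≤ f2 s * Real.exp (-(y/2)) :=
            mul_le_mul_of_nonneg_left h1 (hf2nn s hs0)
    have step2 : (∫ s in Ioi y, f2 s) ≤ M := by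
      refine setIntegral_mono_set hf2int ?_ (HasSubset.Subset.eventuallyLE hsub)
      filter_upwards [ae_restrict_mem measurableSet_Ioi] with s hs using hf2nn s hs.le
    calc U y ≤ ∫ s in Ioi y, f2 s * Real.exp (-(y/2)) := step1
      _ = (∫ s in Ioi y, f2 s) * Real.exp (-(y/2)) := by rw [integral_mul_const]
      _ ≤ M * Real.exp (-(y/2)) := mul_le_mul_of_nonneg_right step2 (Real.exp_pos _).le
  -- derivative setup
  have hcxc : Continuous fun x : ℝ => c * x ^ α :=
    continuous_const.mul (Real.continuous_rpow_const hα0.le)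
  have hpow : ∀ x : ℝ, HasDerivAt (fun x : ℝ => c * x ^ α) (c * (α * x ^ (α - 1))) x :=
    fun x => (Real.hasDerivAt_rpow_const (p := α) (Or.inr (by linarith))).const_mul c
  set k : ℝ → ℝ := fun x => x ^ 2 / 2 * (f (c * x ^ α) * (c * (α * x ^ (α - 1)))) with hkdef
  have hkc : Continuous k := by
    refine (((continuous_pow 2).div_const 2).mul ((hfc.comp hcxc).mul
      (continuous_const.mul (continuous_const.mul (Real.continuous_rpow_const (by linarith))))))
  set H : ℝ → ℝ := fun x => x ^ 2 / 2 * (Γn - φ (c * x ^ α)) with hHdef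
  have hHd : ∀ x : ℝ, HasDerivAt H (x * (Γn - φ (c * x ^ α)) - k x) x := by
    intro x
    have h1 : HasDerivAt (fun x : ℝ => φ (c * x ^ α))
        (f (c * x ^ α) * (c * (α * x ^ (α - 1)))) x := (hφd _).comp x (hpow x)
    have h2 : HasDerivAt (fun x : ℝ => x ^ 2 / 2) x x := by
      simpa using (hasDerivAt_pow 2 x).div_const 2
    have h3 := h2.mul ((hasDerivAt_const x Γn).sub h1)
    convert h3 using 1
    show x * (Γn - φ (c * x ^ α)) - k x = x * (Γn - φ (c * x ^ α)) + x ^ 2 / 2 * (0 - f (c * x ^ α) * (c * (α * x ^ (α - 1))))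
    rw [hkdef]
    ring
    all_goals exact rfl
  -- FTC
  have hgc : Continuous fun x : ℝ => x * (Γn - φ (c * x ^ α)) :=
    continuous_id.mul (continuous_const.sub (hφcont.comp hcxc))
  have hTf : ∀ D : ℝ, (∫ x in (0:ℝ)..D, x * (Γn - φ (c * x ^ α)))
      = H D + ∫ x in (0:ℝ)..D, k x := by
    intro D
    have hint : IntervalIntegrable (fun x : ℝ => x * (Γn - φ (c * x ^ α)) - k x) volume 0 D :=
      (hgc.sub hkc).intervalIntegrable _ _
    have hftc := intervalIntegral.integral_eq_sub_of_hasDerivAt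
      (fun x _ => hHd x) hint
    have hH0 : H 0 = 0 := by simp [hHdef]
    have hsplit := intervalIntegral.integral_sub (hgc.intervalIntegrable (μ := volume) 0 D)
      (hkc.intervalIntegrable 0 D)
    rw [hH0, sub_zero, hsplit] at hftc
    linarith
  -- limit of ∫ k
  set q : ℝ := α * n + α + 1 with hq
  have hqpos : (-1:ℝ) < q := by
    rw [hq]
    have h0 : (0:ℝ) ≤ (n:ℝ) := Nat.cast_nonneg n
    nlinarith
  have hkeq : EqOn (fun x : ℝ => (α * c ^ (n+1) / 2) * (x ^ q * Real.exp (-c * x ^ α))) k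
      (Ioi 0) := by
    intro x hx
    have hx0 : (0:ℝ) < x := hx
    simp only [hkdef, hfdef]
    have e1 : (c * x ^ α) ^ n = c ^ n * x ^ (α * n) := by
      rw [mul_pow, ← Real.rpow_natCast (x ^ α) n, ← Real.rpow_mul hx0.le]
    have e2 : (x:ℝ) ^ 2 = x ^ (2:ℝ) := (Real.rpow_two x).symm
    have e3 : x ^ (2:ℝ) * x ^ (α * n) * x ^ (α - 1) = x ^ q := by
      rw [← Real.rpow_add hx0, ← Real.rpow_add hx0, hq]
      ring_nf
    rw [e1]
    rw [neg_mul]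
    calc (α * c ^ (n+1) / 2) * (x ^ q * Real.exp (-(c * x ^ α)))
        = (α * c ^ (n+1) / 2) * ((x ^ (2:ℝ) * x ^ (α * n) * x ^ (α - 1))
            * Real.exp (-(c * x ^ α))) := by rw [e3]
      _ = x ^ (2:ℝ) / 2 * (c ^ n * x ^ (α * n) * Real.exp (-(c * x ^ α))
            * (c * (α * x ^ (α - 1)))) := by ring
      _ = x ^ 2 / 2 * (c ^ n * x ^ (α * n) * Real.exp (-(c * x ^ α))
            * (c * (α * x ^ (α - 1)))) := by rw [e2]
  have hqint : IntegrableOn (fun x : ℝ => (α * c ^ (n+1) / 2)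
      * (x ^ q * Real.exp (-c * x ^ α))) (Ioi 0) := by
    exact (integrableOn_rpow_mul_exp_neg_mul_rpow hqpos (by linarith) hc).const_mul _
  have hkInt : IntegrableOn k (Ioi 0) := hqint.congr_fun hkeq measurableSet_Ioi
  have hKval : (∫ x in Ioi (0:ℝ), k x)
      = c ^ (-2/α) * Real.Gamma ((n:ℝ) + 1 + 2/α) / 2 := by
    rw [← setIntegral_congr_fun measurableSet_Ioi hkeq, integral_const_mul,
      integral_rpow_mul_exp_neg_mul_rpow hα0 hqpos hc]
    have eexp : (q + 1) / α = (n:ℝ) + 1 + 2/α := by field_simp; ring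
    rw [eexp]
    have ec : c ^ (n+1) * c ^ (-((n:ℝ) + 1 + 2/α)) = c ^ (-2/α) := by
      rw [← Real.rpow_natCast c (n+1), ← Real.rpow_add hc]
      congr 1
      push_cast
      ring
    have : -(q + 1) / α = -((n:ℝ) + 1 + 2/α) := by field_simp; ring
    rw [this]
    field_simp
    have ec' : c ^ (n+1) * c ^ ((-2 + -(((n:ℝ)+1)*α))/α) = c ^ (-2/α) := by
      rw [← Real.rpow_natCast c (n+1), ← Real.rpow_add hc]
      congr 1
      push_cast
      field_simp
      ring
    rw [← Real.rpow_natCast c (n+1), ← Real.rpow_add hc]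
    congr 1
    push_cast
    rw [add_div, mul_div_cancel_left₀ _ hα0.ne']
    ring
  have hKlim : Tendsto (fun D : ℝ => ∫ x in (0:ℝ)..D, k x) atTop
      (nhds (c ^ (-2/α) * Real.Gamma ((n:ℝ) + 1 + 2/α) / 2)) := by
    have h := intervalIntegral_tendsto_integral_Ioi 0 hkInt tendsto_id
    rwa [hKval] at h
  -- limit of H
  have hHlim : Tendsto H atTop (nhds 0) := by
    have hg : Tendsto (fun D : ℝ => D ^ 2 * Real.exp (-(c/2) * D ^ α)) atTop (nhds 0) := by
      have h1 := (tendsto_rpow_mul_exp_neg_mul_atTop_nhds_zero (2/α) (c/2)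
        (by positivity)).comp (tendsto_rpow_atTop hα0)
      refine h1.congr' ?_
      filter_upwards [eventually_ge_atTop (0:ℝ)] with D hD
      simp only [Function.comp]
      rw [← Real.rpow_mul hD, mul_div_cancel₀ _ hα0.ne', Real.rpow_two]
    have hsq : Tendsto (fun D : ℝ => M/2 * (D ^ 2 * Real.exp (-(c/2) * D ^ α))) atTop
        (nhds 0) := by
      have := hg.const_mul (M/2)
      simpa using this
    refine squeeze_zero' ?_ ?_ hsq
    · filter_upwards [eventually_ge_atTop (0:ℝ)] with D hD
      have hy : 0 ≤ c * D ^ α := mul_nonneg hc.le (Real.rpow_nonneg hD α)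
      have : H D = D ^ 2 / 2 * U (c * D ^ α) := by rw [hHdef]; simp only; rw [hUeq _ hy]
      rw [this]
      exact mul_nonneg (by positivity) (hUnn _ hy)
    · filter_upwards [eventually_ge_atTop (0:ℝ)] with D hD
      have hy : 0 ≤ c * D ^ α := mul_nonneg hc.le (Real.rpow_nonneg hD α)
      have hHval : H D = D ^ 2 / 2 * U (c * D ^ α) := by
        rw [hHdef]; simp only; rw [hUeq _ hy]
      calc H D = D ^ 2 / 2 * U (c * D ^ α) := hHval
        _ ≤ D ^ 2 / 2 * (M * Real.exp (-(c * D ^ α / 2))) :=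
            mul_le_mul_of_nonneg_left (hUb _ hy) (by positivity)
        _ = M/2 * (D ^ 2 * Real.exp (-(c/2) * D ^ α)) := by
            rw [show -(c * D ^ α / 2) = -(c/2) * D ^ α by ring]; ring
  -- assemble
  have hmain : Tendsto (fun D : ℝ => 2 / Γn * (H D + ∫ x in (0:ℝ)..D, k x)) atTop
      (nhds (2 / Γn * (0 + c ^ (-2/α) * Real.Gamma ((n:ℝ) + 1 + 2/α) / 2))) :=
    (hHlim.add hKlim).const_mul _
  have heq : (fun D : ℝ => 2 / Γn * (H D + ∫ x in (0:ℝ)..D, k x)) =ᶠ[atTop]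
      (fun D : ℝ => D ^ 2 *
        (1 - (∫ x in (0:ℝ)..D, lowerGamma ((n:ℝ) + 1) (c * x ^ α) * (2 * x / D ^ 2)) / Γn)) := by
    filter_upwards [eventually_gt_atTop (0:ℝ)] with D hD
    have hD0 : (D:ℝ) ≠ 0 := ne_of_gt hD
    have hci : Continuous fun x : ℝ => φ (c * x ^ α) := hφcont.comp hcxc
    have e1 : (∫ x in (0:ℝ)..D, lowerGamma ((n:ℝ) + 1) (c * x ^ α) * (2 * x / D ^ 2))
        = 2 / D ^ 2 * ∫ x in (0:ℝ)..D, x * φ (c * x ^ α) := by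
      rw [← intervalIntegral.integral_const_mul]
      refine intervalIntegral.integral_congr fun x _ => ?_
      rw [hlg]; ring
    have e2 : (∫ x in (0:ℝ)..D, x * (Γn - φ (c * x ^ α)))
        = Γn * (D ^ 2 / 2) - ∫ x in (0:ℝ)..D, x * φ (c * x ^ α) := by
      have i1 : IntervalIntegrable (fun x : ℝ => x * Γn) volume 0 D :=
        (continuous_id.mul continuous_const).intervalIntegrable _ _
      have i2 : IntervalIntegrable (fun x : ℝ => x * φ (c * x ^ α)) volume 0 D :=
        (continuous_id.mul hci).intervalIntegrable _ _
      calc (∫ x in (0:ℝ)..D, x * (Γn - φ (c * x ^ α)))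
          = ∫ x in (0:ℝ)..D, (x * Γn - x * φ (c * x ^ α)) :=
            intervalIntegral.integral_congr fun x _ => by ring
        _ = (∫ x in (0:ℝ)..D, x * Γn) - ∫ x in (0:ℝ)..D, x * φ (c * x ^ α) :=
            intervalIntegral.integral_sub i1 i2
        _ = Γn * (D ^ 2 / 2) - ∫ x in (0:ℝ)..D, x * φ (c * x ^ α) := by
            rw [intervalIntegral.integral_mul_const, integral_id]; ring
    rw [← hTf D, e1, e2]
    field_simp
  have hfin := Filter.Tendsto.congr' heq hmain
  convert hfin using 2
  field_simp
  ring
end
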